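/- Let P = sgp⟨X | uᵢ = vᵢ⟩ be a semigroup presentation and S^c the set of binomial relations of a Gröbner–Shirshov basis of the ideal of k⟨X⟩ generated by {uᵢ − vᵢ} (consisting again of binomials u − v with u, v ∈ X*). Then the map sending a word to its class induces a k-algebra isomorphism k⟨X⟩/Id({uᵢ − vᵢ}) ≅ k[X*/ρ(S)], where ρ(S) is the congruence generated by S; in particular the S^c-irreducible words form a set of unique normal forms for the elements of the semigroup P. -/

import Mathlib

/-- The monomial `u ∈ X*` viewed in the free associative algebra `k⟨X⟩`. -/
noncomputable def mono (k : Type*) [Field k] {X : Type*} (u : FreeMonoid X) :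
    MonoidAlgebra k (FreeMonoid X) := MonoidAlgebra.of k (FreeMonoid X) u

/-- The leading (maximal) word of a nonzero polynomial. -/
noncomputable def lw {k X : Type*} [Field k] [LinearOrder (FreeMonoid X)]
    (f : MonoidAlgebra k (FreeMonoid X)) (hf : f ≠ 0) : FreeMonoid X :=
  f.coeff.support.max' (Finsupp.support_nonempty_iff.mpr (fun h => hf (by
    rw [← MonoidAlgebra.ofCoeff_coeff f, h, MonoidAlgebra.ofCoeff_zero])))

/-- The two-sided ideal generated by `S`, as the `k`-span of all `S`-words `a·s·b`. -/
noncomputable def idSpan {k X : Type*} [Field k]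
    (S : Set (MonoidAlgebra k (FreeMonoid X))) :
    Submodule k (MonoidAlgebra k (FreeMonoid X)) :=
  Submodule.span k {x | ∃ (a b : FreeMonoid X) (s : MonoidAlgebra k (FreeMonoid X)),
    s ∈ S ∧ x = mono k a * s * mono k b}

/-- The set of binomials `u − v` associated to a set of semigroup relations. -/
noncomputable def binoms (k : Type*) [Field k] {X : Type*}
    (R : Set (FreeMonoid X × FreeMonoid X)) : Set (MonoidAlgebra k (FreeMonoid X)) :=
  {f | ∃ p ∈ R, f = mono k p.1 - mono k p.2}

lemma mono_mul {k : Type*} [Field k] {X : Type*} (u v : FreeMonoid X) :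
    mono k (u * v) = mono k u * mono k v := map_mul (MonoidAlgebra.of k (FreeMonoid X)) u v

lemma mono_one {k : Type*} [Field k] {X : Type*} :
    mono k (1 : FreeMonoid X) = 1 := map_one (MonoidAlgebra.of k (FreeMonoid X))

lemma mem_idSpan_of_mem {k X : Type*} [Field k] {S : Set (MonoidAlgebra k (FreeMonoid X))}
    {s : MonoidAlgebra k (FreeMonoid X)} (hs : s ∈ S) : s ∈ idSpan S := by
  apply Submodule.subset_span
  exact ⟨1, 1, s, hs, by simp [mono_one]⟩

lemma idSpan_mul_mono {k X : Type*} [Field k] {S : Set (MonoidAlgebra k (FreeMonoid X))}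
    {f : MonoidAlgebra k (FreeMonoid X)} (hf : f ∈ idSpan S) (c d : FreeMonoid X) :
    mono k c * f * mono k d ∈ idSpan S := by
  induction hf using Submodule.span_induction with
  | mem x hx =>
    obtain ⟨a, b, s, hs, rfl⟩ := hx
    apply Submodule.subset_span
    refine ⟨c * a, b * d, s, hs, ?_⟩
    simp only [mono_mul]; noncomm_ring
  | zero => simp only [mul_zero, zero_mul]; exact zero_mem _
  | add x y _ _ hx hy =>
    have : mono k c * (x + y) * mono k d
        = mono k c * x * mono k d + mono k c * y * mono k d := by noncomm_ring
    rw [this]; exact add_mem hx hy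
  | smul t x _ hx =>
    have : mono k c * (t • x) * mono k d = t • (mono k c * x * mono k d) := by
      rw [mul_smul_comm, smul_mul_assoc]
    rw [this]; exact Submodule.smul_mem _ _ hx

lemma conGen_sub_mem {k X : Type*} [Field k] {R : Set (FreeMonoid X × FreeMonoid X)}
    {u v : FreeMonoid X}
    (h : ConGen.Rel (fun u v : FreeMonoid X => (u, v) ∈ R) u v) :
    mono k u - mono k v ∈ idSpan (binoms k R) := by
  induction h with
  | of x y hxy => exact mem_idSpan_of_mem ⟨(x, y), hxy, rfl⟩
  | refl x => simp only [sub_self]; exact zero_mem _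
  | symm _ ih => rw [← neg_sub]; exact neg_mem ih
  | trans _ _ ih1 ih2 =>
    have : ∀ a b c : MonoidAlgebra k (FreeMonoid X), a - c = (a - b) + (b - c) := by
      intros; noncomm_ring
    rw [this _ _ _]; exact add_mem ih1 ih2
  | mul _ _ ih1 ih2 =>
    rename_i w x y z _ _
    have e : mono k (w * y) - mono k (x * z)
        = mono k w * (mono k y - mono k z) * mono k (1 : FreeMonoid X)
          + mono k (1 : FreeMonoid X) * (mono k w - mono k x) * mono k z := by
      simp only [mono_mul, mono_one]; noncomm_ring
    rw [e]
    exact add_mem (idSpan_mul_mono ih2 w 1) (idSpan_mul_mono ih1 1 z)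

/-- For a semigroup presentation `P = sgp⟨X | uᵢ = vᵢ⟩` with set of relations `rel`, let
`Sc` be the set of binomial relations of a Gröbner–Shirshov basis of the ideal of `k⟨X⟩`
generated by the binomials `uᵢ − vᵢ` (again consisting of binomials `u − v` with leading
word `u`).  Then the map sending a word to its congruence class induces a `k`-algebra
isomorphism `k⟨X⟩/Id({uᵢ − vᵢ}) ≅ k[X*/ρ(rel)]`, and the `Sc`-irreducible words map
bijectively onto the quotient monoid, i.e. they form unique normal forms for `P`. -/
theorem semigroup_algebra_normal_forms {k X : Type*} [Field k]
    [LinearOrder (FreeMonoid X)] [WellFoundedLT (FreeMonoid X)]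
    (hmul : ∀ u v w₁ w₂ : FreeMonoid X, u < v → w₁ * u * w₂ < w₁ * v * w₂)
    (rel Sc : Set (FreeMonoid X × FreeMonoid X))
    (hmonic : ∀ p ∈ Sc, p.2 < p.1)
    (hsame : idSpan (binoms k Sc) = idSpan (binoms k rel))
    (hGS : ∀ f ∈ idSpan (binoms k Sc), ∀ hf : f ≠ 0,
      ∃ p ∈ Sc, ∃ a b : FreeMonoid X, lw f hf = a * p.1 * b) :
    (∃ φ : RingQuot (fun a b : MonoidAlgebra k (FreeMonoid X) =>
          ∃ p ∈ rel, a = mono k p.1 ∧ b = mono k p.2) ≃ₐ[k]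
        MonoidAlgebra k (conGen fun u v : FreeMonoid X => (u, v) ∈ rel).Quotient,
      ∀ w : FreeMonoid X,
        φ (RingQuot.mkAlgHom k _ (mono k w)) =
          MonoidAlgebra.of k (conGen fun u v : FreeMonoid X => (u, v) ∈ rel).Quotient
            (Con.mk' _ w)) ∧
    Function.Bijective
      (fun u : {u : FreeMonoid X // ¬ ∃ p ∈ Sc, ∃ a b : FreeMonoid X, u = a * p.1 * b} =>
        Con.mk' (conGen fun u v : FreeMonoid X => (u, v) ∈ rel) u.1) := by
  classical
  set c : Con (FreeMonoid X) := conGen fun u v : FreeMonoid X => (u, v) ∈ rel with hc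
  set r : MonoidAlgebra k (FreeMonoid X) → MonoidAlgebra k (FreeMonoid X) → Prop :=
    fun a b => ∃ p ∈ rel, a = mono k p.1 ∧ b = mono k p.2 with hrdef
  -- the projection algebra hom π : k⟨X⟩ → k[X*/ρ(rel)]
  set π : MonoidAlgebra k (FreeMonoid X) →ₐ[k] MonoidAlgebra k c.Quotient :=
    MonoidAlgebra.lift k (MonoidAlgebra k c.Quotient) (FreeMonoid X)
      ((MonoidAlgebra.of k c.Quotient).comp c.mk') with hπ
  have hπmono : ∀ w : FreeMonoid X,
      π (mono k w) = MonoidAlgebra.of k c.Quotient (c.mk' w) := by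
    intro w
    simp [hπ, mono, MonoidAlgebra.lift_of]
  -- π kills the ideal generated by the relation binomials
  have hker : ∀ f ∈ idSpan (binoms k rel), π f = 0 := by
    intro f hf
    have hle : idSpan (binoms k rel) ≤ LinearMap.ker π.toLinearMap := by
      apply Submodule.span_le.mpr
      rintro x ⟨a, b, s, ⟨p, hp, rfl⟩, rfl⟩
      have h12 : (c.mk' p.1 : c.Quotient) = c.mk' p.2 := by
        simp only [Con.coe_mk']
        exact Con.eq _ |>.mpr (ConGen.Rel.of _ _ hp)
      simp only [SetLike.mem_coe, LinearMap.mem_ker, AlgHom.toLinearMap_apply]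
      simp only [map_mul, map_sub, hπmono, h12, sub_self, mul_zero, zero_mul]
    exact (LinearMap.mem_ker).mp (hle hf)
  -- relations of Sc hold in the quotient monoid
  have hmk : ∀ p ∈ Sc, (c.mk' p.1 : c.Quotient) = c.mk' p.2 := by
    intro p hp
    have hmem : mono k p.1 - mono k p.2 ∈ idSpan (binoms k rel) := by
      rw [← hsame]; exact mem_idSpan_of_mem ⟨p, hp, rfl⟩
    have h0 := hker _ hmem
    rw [map_sub, hπmono, hπmono, sub_eq_zero] at h0
    have := MonoidAlgebra.of_injective h0
    exact this
  -- construct the isomorphism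
  have hcompat : ∀ a b : MonoidAlgebra k (FreeMonoid X), r a b → π a = π b := by
    rintro a b ⟨p, hp, rfl, rfl⟩
    rw [hπmono, hπmono]
    congr 1
    simp only [Con.coe_mk']
    exact Con.eq _ |>.mpr (ConGen.Rel.of _ _ hp)
  set F : RingQuot r →ₐ[k] MonoidAlgebra k c.Quotient :=
    RingQuot.liftAlgHom k ⟨π, hcompat⟩ with hF
  have hFmk : ∀ x, F (RingQuot.mkAlgHom k r x) = π x := fun x =>
    RingQuot.liftAlgHom_mkAlgHom_apply k π hcompat x
  set g : c.Quotient →* RingQuot r :=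
    c.lift ((RingQuot.mkAlgHom k r).toRingHom.toMonoidHom.comp
      (MonoidAlgebra.of k (FreeMonoid X)))
      (by
        apply Con.conGen_le.mpr
        intro x y hxy
        rw [Con.ker_rel]
        exact RingQuot.mkAlgHom_rel k ⟨(x, y), hxy, rfl, rfl⟩) with hg
  have hgmk : ∀ w : FreeMonoid X, g (c.mk' w) = RingQuot.mkAlgHom k r (mono k w) := by
    intro w
    simp only [hg, mono, Con.lift_coe, MonoidHom.comp_apply, RingHom.toMonoidHom_eq_coe,
      MonoidHom.coe_coe, RingHom.coe_coe, AlgHom.coe_ringHom_mk]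
    rfl
  set G : MonoidAlgebra k c.Quotient →ₐ[k] RingQuot r :=
    MonoidAlgebra.lift k (RingQuot r) c.Quotient g with hG
  have hGof : ∀ m : c.Quotient, G (MonoidAlgebra.of k c.Quotient m) = g m := fun m =>
    MonoidAlgebra.lift_of g m
  have h1 : F.comp G = AlgHom.id k (MonoidAlgebra k c.Quotient) := by
    apply MonoidAlgebra.algHom_ext ?_ (Subsingleton.elim _ _)
    intro m
    obtain ⟨w, rfl⟩ := Con.mk'_surjective m
    rw [← MonoidAlgebra.of_apply]
    simp only [AlgHom.comp_apply, AlgHom.id_apply, hGof, hgmk, hFmk, hπmono]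
  have h2 : G.comp F = AlgHom.id k (RingQuot r) := by
    apply RingQuot.ringQuot_ext'
    apply MonoidAlgebra.algHom_ext ?_ (Subsingleton.elim _ _)
    intro w
    show G (F (RingQuot.mkAlgHom k r (mono k w))) = RingQuot.mkAlgHom k r (mono k w)
    rw [hFmk, hπmono, hGof, hgmk]
  refine ⟨⟨AlgEquiv.ofAlgHom F G h1 h2, ?_⟩, ?_, ?_⟩
  · intro w
    show F (RingQuot.mkAlgHom k r (mono k w)) = _
    rw [hFmk, hπmono]
  · -- injectivity
    rintro ⟨u, hu⟩ ⟨v, hv⟩ huv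
    simp only at huv
    by_contra hne
    have hne' : u ≠ v := fun h => hne (by simp [h])
    have hcuv : ConGen.Rel (fun u v : FreeMonoid X => (u, v) ∈ rel) u v := by
      have := (Con.eq c).mp (by simpa [Con.coe_mk'] using huv)
      exact this
    have hmem : mono k u - mono k v ∈ idSpan (binoms k Sc) := by
      rw [hsame]; exact conGen_sub_mem hcuv
    have hf0 : mono k u - mono k v ≠ 0 := by
      rw [sub_ne_zero]
      intro h
      exact hne' (MonoidAlgebra.of_injective h)
    obtain ⟨p, hp, a, b, hlw⟩ := hGS _ hmem hf0
    have hlwmem : lw (mono k u - mono k v) hf0 ∈ (mono k u - mono k v).coeff.support :=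
      Finset.max'_mem _ _
    have hsupp : (mono k u - mono k v).coeff.support ⊆ {u, v} := by
      rw [MonoidAlgebra.coeff_sub]
      refine (Finsupp.support_sub).trans ?_
      have h1 : (mono k u).coeff.support = {u} := Finsupp.support_single_ne_zero u one_ne_zero
      have h2 : (mono k v).coeff.support = {v} := Finsupp.support_single_ne_zero v one_ne_zero
      rw [h1, h2]
      intro x hx
      simpa using hx
    have := hsupp hlwmem
    rw [Finset.mem_insert, Finset.mem_singleton] at this
    rcases this with h | h
    · exact hu ⟨p, hp, a, b, by rw [← h, ← hlw]⟩
    · exact hv ⟨p, hp, a, b, by rw [← h, ← hlw]⟩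
  · -- surjectivity
    intro m
    obtain ⟨w, rfl⟩ := Con.mk'_surjective m
    have key : ∀ w : FreeMonoid X,
        ∃ u : {u : FreeMonoid X // ¬ ∃ p ∈ Sc, ∃ a b : FreeMonoid X, u = a * p.1 * b},
          c.mk' u.1 = c.mk' w := by
      intro w
      induction w using WellFoundedLT.induction with
      | _ w ih =>
        by_cases hw : ∃ p ∈ Sc, ∃ a b : FreeMonoid X, w = a * p.1 * b
        · obtain ⟨p, hp, a, b, rfl⟩ := hw
          obtain ⟨u, hu⟩ := ih (a * p.2 * b) (hmul _ _ a b (hmonic p hp))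
          refine ⟨u, hu.trans ?_⟩
          rw [map_mul, map_mul, map_mul, map_mul, hmk p hp]
        · exact ⟨⟨w, hw⟩, rfl⟩
    obtain ⟨u, hu⟩ := key w
    exact ⟨u, hu⟩
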